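/- Let $\mathcal{H}$ be a Hilbert space, $\phi\in\mathcal{H}$ a unit vector, and for each $x\in\mathbb{Z}^d$ let $\chi_x$ be an orthogonal projection on $\mathcal{H}$ with $\sum_{x\in\mathbb{Z}^d}\|\chi_x\psi\|^2 = \|\psi\|^2$ for all $\psi$. Let $T^{-1}$ be a bounded operator commuting with each $\chi_x$ such that $\|\chi_x T^{-1}\| \le \langle x\rangle^{-\kappa}$ with $2\kappa > d$, and set $\alpha_\phi := \|T^{-1}\phi\|^2$. Suppose there exist $\zeta\in(0,1]$, $\sigma>0$, a function $f:\mathbb{R}^+\to\mathbb{R}^+$, and for each $\epsilon>0$ a constant $C_\epsilon$ such that $\|\chi_x\phi\|\,\|\chi_u\phi\| \le C_\epsilon f(\alpha_\phi)\, e^{\epsilon|u|^\zeta} e^{-\sigma|x-u|^\zeta}$ for all $x,u\in\mathbb{Z}^d$. Let $x_\phi\in\mathbb{Z}^d$ maximize $x\mapsto\|\chi_x\phi\|$. Then there exist new constants $C'_\epsilon$ (depending on $d,\kappa,\zeta,\sigma,\epsilon$) such that $\|\chi_x\phi\| \le C'_\epsilon\, \alpha_\phi^{-1/2} f(\alpha_\phi)\,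 e^{\epsilon|x_\phi|^\zeta} e^{-\sigma|x-x_\phi|^\zeta}$ for all $x\in\mathbb{Z}^d$. -/

import Mathlib

open scoped BigOperators

lemma summable_one_dim {p : ℝ} (hp : 1 < 2 * p) :
    Summable fun n : ℤ => (1 + (n : ℝ) ^ 2) ^ (-p) := by
  have hp0 : 0 < p := by linarith
  have hbase : Summable fun n : ℤ => |(n : ℝ)| ^ (-(2 * p)) :=
    Real.summable_abs_int_rpow hp
  have hind : Summable fun n : ℤ => if n = 0 then (1:ℝ) else 0 :=
    summable_of_ne_finset_zero (s := {0}) (by intro b hb; simp at hb ⊢; exact hb)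
  refine Summable.of_nonneg_of_le (fun n => Real.rpow_nonneg (by positivity) _)
    (fun n => ?_) (hbase.add hind)
  by_cases hn : n = 0
  · subst hn
    simp only [Int.cast_zero, ne_eq, abs_zero]
    rw [Real.zero_rpow (neg_ne_zero.mpr (by positivity))]
    norm_num
  · have h1 : (0:ℝ) < |(n:ℝ)| := by
      simp only [abs_pos]
      exact_mod_cast hn
    have h2 : |(n:ℝ)| ^ 2 ≤ 1 + (n:ℝ) ^ 2 := by
      rw [sq_abs]; linarith
    have : (1 + (n : ℝ) ^ 2) ^ (-p) ≤ (|(n:ℝ)| ^ 2) ^ (-p) :=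
      Real.rpow_le_rpow_of_nonpos (by positivity) h2 (by linarith)
    calc (1 + (n : ℝ) ^ 2) ^ (-p) ≤ (|(n:ℝ)| ^ 2) ^ (-p) := this
      _ = |(n:ℝ)| ^ (-(2 * p)) := by
          rw [← Real.rpow_natCast |(n:ℝ)| 2, ← Real.rpow_mul (abs_nonneg _)]
          rw [show ((2:ℕ):ℝ) * (-p) = -(2*p) by push_cast; ring]
      _ ≤ _ := by simp [hn]

lemma summable_pi_prod' {g : ℤ → ℝ} (hg : Summable g) (hg0 : ∀ n, 0 ≤ g n) :
    ∀ d : ℕ, Summable fun x : Fin d → ℤ => ∏ i, g (x i)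
  | 0 => by apply Summable.of_finite
  | (d+1) => by
      rw [← (Fin.consEquiv (fun _ => ℤ)).summable_iff]
      have h := hg.mul_of_nonneg (summable_pi_prod' hg hg0 d) hg0
        (fun x => Finset.prod_nonneg fun i _ => hg0 _)
      refine h.congr fun p => ?_
      show _ = ∏ i : Fin (d+1), g ((Fin.consEquiv (fun _ => ℤ)) p i)
      rw [Fin.prod_univ_succ]
      simp [Fin.consEquiv]

lemma summable_weight {d : ℕ} (hd : 0 < d) {κ : ℝ} (hκ : (d : ℝ) < 2 * κ) :
    Summable fun x : Fin d → ℤ => (1 + ‖x‖ ^ 2) ^ (-κ) := by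
  set p := κ / d with hp_def
  have hd' : (0:ℝ) < d := by exact_mod_cast hd
  have hp : 1 < 2 * p := by
    rw [hp_def, ← mul_div_assoc, lt_div_iff₀ hd']
    linarith
  have hp0 : 0 < p := by linarith
  have hg := summable_one_dim hp
  have hprod := summable_pi_prod' hg (fun n => Real.rpow_nonneg (by positivity) _) d
  refine Summable.of_nonneg_of_le (fun x => Real.rpow_nonneg (by positivity) _)
    (fun x => ?_) hprod
  have habs : ∀ i, ((x i : ℝ)) ^ 2 ≤ ‖x‖ ^ 2 := by
    intro i
    have h1 : |(x i : ℝ)| ≤ ‖x‖ := by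
      have := norm_le_pi_norm x i
      rwa [Int.norm_eq_abs] at this
    calc ((x i : ℝ)) ^ 2 = |(x i : ℝ)| ^ 2 := (sq_abs _).symm
      _ ≤ ‖x‖ ^ 2 := by gcongr
  have hprodle : ∏ i, (1 + ((x i : ℝ)) ^ 2) ≤ (1 + ‖x‖ ^ 2) ^ (d : ℕ) := by
    calc ∏ i, (1 + ((x i : ℝ)) ^ 2) ≤ ∏ _i : Fin d, (1 + ‖x‖ ^ 2) := by
          apply Finset.prod_le_prod (fun i _ => by positivity) (fun i _ => by linarith [habs i])
      _ = (1 + ‖x‖ ^ 2) ^ (d : ℕ) := by simp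
  have hppos : (0:ℝ) < ∏ i, (1 + ((x i : ℝ)) ^ 2) :=
    Finset.prod_pos fun i _ => by positivity
  have key : (1 + ‖x‖ ^ 2) ^ (-κ) = ((1 + ‖x‖ ^ 2) ^ (d : ℕ)) ^ (-p) := by
    rw [← Real.rpow_natCast (1 + ‖x‖ ^ 2) d, ← Real.rpow_mul (by positivity)]
    congr 1
    rw [hp_def]
    field_simp
  rw [key]
  calc ((1 + ‖x‖ ^ 2) ^ (d : ℕ)) ^ (-p) ≤ (∏ i, (1 + ((x i : ℝ)) ^ 2)) ^ (-p) :=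
        Real.rpow_le_rpow_of_nonpos hppos hprodle (by linarith)
    _ = ∏ i, (1 + ((x i : ℝ)) ^ 2) ^ (-p) :=
        (Real.finset_prod_rpow _ _ (fun i _ => by positivity) _).symm

/-- (SUDEC)_f implies (SULE)_{f(s)/√s}: from a semi-uniform decay of eigenfunction
correlations one deduces semi-uniform localization around a maximizing center. -/
theorem stmt_2 {d : ℕ} (hd : 0 < d) {H : Type*} [NormedAddCommGroup H]
    [InnerProductSpace ℂ H] [CompleteSpace H]
    (χ : (Fin d → ℤ) → H →L[ℂ] H)
    (hproj : ∀ x, IsSelfAdjoint (χ x) ∧ (χ x).comp (χ x) = χ x)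
    (hres : ∀ ψ : H, HasSum (fun x => ‖χ x ψ‖ ^ 2) (‖ψ‖ ^ 2))
    (κ : ℝ) (hκ : (d : ℝ) < 2 * κ)
    (Tinv : H →L[ℂ] H)
    (hcomm : ∀ x, (χ x).comp Tinv = Tinv.comp (χ x))
    (hT : ∀ x, ‖(χ x).comp Tinv‖ ≤ (1 + ‖x‖ ^ 2) ^ (-(κ / 2)))
    (φ : H) (hφ : ‖φ‖ = 1) (hα : 0 < ‖Tinv φ‖)
    (ζ σ : ℝ) (hζ0 : 0 < ζ) (hζ1 : ζ ≤ 1) (hσ : 0 < σ)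
    (f : ℝ → ℝ) (hf : ∀ s, 0 ≤ f s)
    (hsudec : ∀ ε > 0, ∃ C > 0, ∀ x u : Fin d → ℤ,
      ‖χ x φ‖ * ‖χ u φ‖ ≤
        C * f (‖Tinv φ‖ ^ 2) * Real.exp (ε * ‖u‖ ^ ζ) * Real.exp (-σ * ‖x - u‖ ^ ζ))
    (xφ : Fin d → ℤ) (hmax : ∀ x, ‖χ x φ‖ ≤ ‖χ xφ φ‖) :
    ∀ ε > 0, ∃ C' > 0, ∀ x : Fin d → ℤ,
      ‖χ x φ‖ ≤ C' * (‖Tinv φ‖)⁻¹ * f (‖Tinv φ‖ ^ 2) *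
        Real.exp (ε * ‖xφ‖ ^ ζ) * Real.exp (-σ * ‖x - xφ‖ ^ ζ) := by
  
  intro ε hε
  obtain ⟨C, hC, hCle⟩ := hsudec ε hε
  have hsum := summable_weight hd hκ
  set M := ‖χ xφ φ‖ with hM
  set S := ∑' x : Fin d → ℤ, (1 + ‖x‖ ^ 2) ^ (-κ) with hS
  have hS1 : (1:ℝ) ≤ S := by
    have h0 : ((1:ℝ) + ‖(0 : Fin d → ℤ)‖ ^ 2) ^ (-κ) = 1 := by
      simp
    calc (1:ℝ) = (1 + ‖(0 : Fin d → ℤ)‖ ^ 2) ^ (-κ) := h0.symm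
      _ ≤ S := Summable.le_tsum hsum 0 (fun j _ => Real.rpow_nonneg (by positivity) _)
  have hSpos : (0:ℝ) < S := lt_of_lt_of_le one_pos hS1
  -- term bound
  have hterm : ∀ x, ‖χ x (Tinv φ)‖ ^ 2 ≤ (1 + ‖x‖ ^ 2) ^ (-κ) * M ^ 2 := by
    intro x
    have hcomm' : ∀ ψ, χ x (Tinv ψ) = Tinv (χ x ψ) := fun ψ =>
      ContinuousLinearMap.ext_iff.mp (hcomm x) ψ
    have hproj' : ∀ ψ : H, χ x (χ x ψ) = χ x ψ := fun ψ =>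
      ContinuousLinearMap.ext_iff.mp (hproj x).2 ψ
    have h1 : χ x (Tinv φ) = ((χ x).comp Tinv) (χ x φ) := by
      show χ x (Tinv φ) = χ x (Tinv (χ x φ))
      rw [hcomm' (χ x φ), hproj' φ, ← hcomm' φ]
    have h2 : ‖χ x (Tinv φ)‖ ≤ (1 + ‖x‖ ^ 2) ^ (-(κ / 2)) * M := by
      rw [h1]
      refine le_trans (((χ x).comp Tinv).le_opNorm _) ?_
      exact mul_le_mul (hT x) (hmax x) (norm_nonneg _) (Real.rpow_nonneg (by positivity) _)
    have h3 : ‖χ x (Tinv φ)‖ ^ 2 ≤ ((1 + ‖x‖ ^ 2) ^ (-(κ / 2)) * M) ^ 2 := by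
      have hnn : (0:ℝ) ≤ (1 + ‖x‖ ^ 2) ^ (-(κ / 2)) * M :=
        mul_nonneg (Real.rpow_nonneg (by positivity) _) (norm_nonneg _)
      exact pow_le_pow_left₀ (norm_nonneg _) h2 2
    refine h3.trans_eq ?_
    rw [mul_pow]
    congr 1
    rw [← Real.rpow_natCast ((1 + ‖x‖ ^ 2) ^ (-(κ / 2))) 2,
      ← Real.rpow_mul (by positivity)]
    congr 1
    push_cast
    ring
  have hhs := hres (Tinv φ)
  have hαle : ‖Tinv φ‖ ^ 2 ≤ S * M ^ 2 := by
    rw [← hhs.tsum_eq]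
    calc ∑' x, ‖χ x (Tinv φ)‖ ^ 2 ≤ ∑' x, (1 + ‖x‖ ^ 2) ^ (-κ) * M ^ 2 :=
        Summable.tsum_le_tsum hterm hhs.summable (hsum.mul_right _)
      _ = S * M ^ 2 := by rw [tsum_mul_right]
  have hMpos : 0 < M := by
    rcases lt_or_eq_of_le (norm_nonneg (χ xφ φ)) with h | h
    · exact h
    · exfalso; rw [hM, ← h] at hαle; nlinarith
  have hTle : ‖Tinv φ‖ ≤ Real.sqrt S * M := by
    calc ‖Tinv φ‖ = Real.sqrt (‖Tinv φ‖ ^ 2) := (Real.sqrt_sq (norm_nonneg _)).symm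
      _ ≤ Real.sqrt (S * M ^ 2) := Real.sqrt_le_sqrt hαle
      _ = Real.sqrt S * M := by
          rw [Real.sqrt_mul hSpos.le, Real.sqrt_sq hMpos.le]
  have hsqrtSpos : 0 < Real.sqrt S := Real.sqrt_pos.mpr hSpos
  refine ⟨C * Real.sqrt S, mul_pos hC hsqrtSpos, fun x => ?_⟩
  set R := C * f (‖Tinv φ‖ ^ 2) * Real.exp (ε * ‖xφ‖ ^ ζ) *
    Real.exp (-σ * ‖x - xφ‖ ^ ζ) with hR_def
  have hR0 : 0 ≤ R := by
    have := hf (‖Tinv φ‖ ^ 2)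
    positivity
  have h5 : ‖χ x φ‖ ≤ R / M := (le_div_iff₀ hMpos).mpr (hCle x xφ)
  have h6 : 1 / M ≤ Real.sqrt S / ‖Tinv φ‖ := by
    rw [div_le_div_iff₀ hMpos hα]
    linarith
  calc ‖χ x φ‖ ≤ R / M := h5
    _ = R * (1 / M) := by ring
    _ ≤ R * (Real.sqrt S / ‖Tinv φ‖) := mul_le_mul_of_nonneg_left h6 hR0
    _ = C * Real.sqrt S * (‖Tinv φ‖)⁻¹ * f (‖Tinv φ‖ ^ 2) *
        Real.exp (ε * ‖xφ‖ ^ ζ) * Real.exp (-σ * ‖x - xφ‖ ^ ζ) := by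
        rw [hR_def]
        field_simp
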